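/- Assume the bidder values are μ-almost surely nonnegative and integrable, and let δ > 0. If q > 0 satisfies ktw_δ(q) = q (i.e. q is an equilibrium price of the TWDPP mechanism), then W_R(q) ≥ OPT·min(1, δ)/(2·(1 + δ)). -/

import Mathlib

open MeasureTheory Filter

/-- Number of bidders with value at least `q`. -/
noncomputable def demandCount (n : ℕ) (q : ℝ) (v : Fin n → ℝ) : ℕ :=
  (Finset.univ.filter fun i => q ≤ v i).card

/-- Truncated welfare kernel of the TWDPP mechanism. -/
noncomputable def ktw (n m : ℕ) (δ : ℝ) (μ : Measure ℝ) (q : ℝ) : ℝ :=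
  ∫ v, (if demandCount n q v < m then
          (1 / (m : ℝ)) * ∑ i ∈ Finset.univ.filter (fun i => q ≤ v i),
            min (v i) ((1 + δ) * q)
        else (1 + δ) * q) ∂(Measure.pi fun _ : Fin n => μ)

/-- Expected welfare of the uniformly random maximal (RM) allocation at price `q`:
`E[min(1, m/N(q,v)) · Σ_{i : vᵢ ≥ q} vᵢ]`, with the factor equal to `1` when
`N(q,v) ≤ m`. -/
noncomputable def WR (n m : ℕ) (μ : Measure ℝ) (q : ℝ) : ℝ :=
  ∫ v, (if demandCount n q v ≤ m then 1 else (m : ℝ) / (demandCount n q v)) *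
          ∑ i ∈ Finset.univ.filter (fun i => q ≤ v i), v i
    ∂(Measure.pi fun _ : Fin n => μ)

/-- Expected optimal welfare `OPT`. -/
noncomputable def OPTwelfare (n m : ℕ) (μ : Measure ℝ) : ℝ :=
  ∫ v, (((Finset.univ : Finset (Fin n)).powerset.filter fun S => S.card ≤ m).sup'
      ⟨∅, by simp⟩ fun S => ∑ i ∈ S, v i) ∂(Measure.pi fun _ : Fin n => μ)

namespace TWDPPaux

lemma dc_eq (n : ℕ) (q : ℝ) (v : Fin n → ℝ) :
    demandCount n q v = ∑ i, if q ≤ v i then 1 else 0 := by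
  unfold demandCount
  rw [Finset.card_filter]

lemma measurable_dc (n : ℕ) (q : ℝ) : Measurable (demandCount n q) := by
  have h : demandCount n q = fun v => ∑ i, if q ≤ v i then 1 else 0 :=
    funext (dc_eq n q)
  rw [h]
  exact Finset.measurable_sum _ fun i _ =>
    Measurable.ite (measurableSet_le measurable_const (measurable_pi_apply i))
      measurable_const measurable_const

lemma measSet_lt (n : ℕ) (q : ℝ) (m : ℕ) :
    MeasurableSet {v : Fin n → ℝ | demandCount n q v < m} :=
  measurable_dc n q (show MeasurableSet {k : ℕ | k < m} from trivial)

lemma measSet_le (n : ℕ) (q : ℝ) (m : ℕ) :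
    MeasurableSet {v : Fin n → ℝ | demandCount n q v ≤ m} :=
  measurable_dc n q (show MeasurableSet {k : ℕ | k ≤ m} from trivial)

/-- truncated value function -/
noncomputable def f0 (q x : ℝ) : ℝ := if q ≤ x then x else 0

lemma f0_nonneg {q : ℝ} (hq : 0 < q) (x : ℝ) : 0 ≤ f0 q x := by
  unfold f0; split
  · linarith
  · rfl

lemma integrable_f0 {μ : Measure ℝ} (hint : Integrable (id : ℝ → ℝ) μ) (q : ℝ) :
    Integrable (f0 q) μ := by
  have h := hint.indicator (measurableSet_Ici (a := q))
  have he : (Set.Ici q).indicator (id : ℝ → ℝ) = f0 q := by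
    funext x
    simp [Set.indicator_apply, f0, Set.mem_Ici]
  rwa [he] at h

lemma measurable_f0 (q : ℝ) : Measurable (f0 q) :=
  Measurable.ite (measurableSet_le measurable_const measurable_id) measurable_id measurable_const

lemma sum_filter_eq (n : ℕ) (q : ℝ) (v : Fin n → ℝ) :
    ∑ i ∈ Finset.univ.filter (fun i => q ≤ v i), v i = ∑ i, f0 q (v i) :=
  Finset.sum_filter _ _


variable {μ : Measure ℝ} [IsProbabilityMeasure μ]

/-- WR integrand -/
noncomputable def wrI (n m : ℕ) (q : ℝ) (v : Fin n → ℝ) : ℝ :=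
  (if demandCount n q v ≤ m then 1 else (m : ℝ) / (demandCount n q v)) *
    ∑ i ∈ Finset.univ.filter (fun i => q ≤ v i), v i

/-- ktw integrand -/
noncomputable def ktwI (n m : ℕ) (δ q : ℝ) (v : Fin n → ℝ) : ℝ :=
  if demandCount n q v < m then
    (1 / (m : ℝ)) * ∑ i ∈ Finset.univ.filter (fun i => q ≤ v i),
      min (v i) ((1 + δ) * q)
  else (1 + δ) * q

lemma factor_nonneg (n m : ℕ) (q : ℝ) (v : Fin n → ℝ) :
    0 ≤ (if demandCount n q v ≤ m then (1:ℝ) else (m : ℝ) / (demandCount n q v)) := by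
  split
  · norm_num
  · positivity

lemma factor_le_one (n m : ℕ) (q : ℝ) (v : Fin n → ℝ) :
    (if demandCount n q v ≤ m then (1:ℝ) else (m : ℝ) / (demandCount n q v)) ≤ 1 := by
  split
  · exact le_refl _
  · rename_i h
    push_neg at h
    have h0 : (0:ℝ) < (demandCount n q v : ℝ) := by
      exact_mod_cast Nat.pos_of_ne_zero (by omega)
    rw [div_le_one h0]
    exact_mod_cast h.le

lemma sum_f0_nonneg {q : ℝ} (hq : 0 < q) (n : ℕ) (v : Fin n → ℝ) :
    0 ≤ ∑ i, f0 q (v i) :=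
  Finset.sum_nonneg fun i _ => f0_nonneg hq _

lemma wrI_nonneg {q : ℝ} (hq : 0 < q) (n m : ℕ) (v : Fin n → ℝ) :
    0 ≤ wrI n m q v := by
  rw [wrI, sum_filter_eq]
  exact mul_nonneg (factor_nonneg n m q v) (sum_f0_nonneg hq n v)

lemma wrI_le_sumAbs {q : ℝ} (hq : 0 < q) (n m : ℕ) (v : Fin n → ℝ) :
    wrI n m q v ≤ ∑ i, |v i| := by
  rw [wrI, sum_filter_eq]
  calc (if demandCount n q v ≤ m then (1:ℝ) else (m : ℝ) / (demandCount n q v)) *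
        ∑ i, f0 q (v i) ≤ 1 * ∑ i, f0 q (v i) :=
        mul_le_mul_of_nonneg_right (factor_le_one n m q v) (sum_f0_nonneg hq n v)
    _ = ∑ i, f0 q (v i) := one_mul _
    _ ≤ ∑ i, |v i| := Finset.sum_le_sum fun i _ => by
        unfold f0; split
        · exact le_abs_self _
        · positivity

lemma measurable_wrI (n m : ℕ) (q : ℝ) : Measurable (wrI n m q) := by
  have h : wrI n m q = fun v =>
      (if demandCount n q v ≤ m then (1:ℝ) else (m : ℝ) / (demandCount n q v)) *
        ∑ i, f0 q (v i) := by
    funext v; rw [wrI, sum_filter_eq]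
  rw [h]
  refine Measurable.mul ?_ ?_
  · refine Measurable.ite (measSet_le n q m) measurable_const ?_
    exact measurable_const.div (measurable_from_top.comp (measurable_dc n q))
  · exact Finset.measurable_sum _ fun i _ => (measurable_f0 q).comp (measurable_pi_apply i)

lemma measurable_ktwI (n m : ℕ) (δ q : ℝ) : Measurable (ktwI n m δ q) := by
  have h : ktwI n m δ q = fun v =>
      if demandCount n q v < m then
        (1 / (m : ℝ)) * ∑ i, (if q ≤ v i then min (v i) ((1 + δ) * q) else 0)
      else (1 + δ) * q := by
    funext v; rw [ktwI, Finset.sum_filter]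
  rw [h]
  refine Measurable.ite (measSet_lt n q m) ?_ measurable_const
  refine measurable_const.mul ?_
  exact Finset.measurable_sum _ fun i _ =>
    Measurable.ite (measurableSet_le measurable_const (measurable_pi_apply i))
      ((measurable_pi_apply i).min measurable_const) measurable_const


lemma integrable_eval {n : ℕ} (i : Fin n) {f : ℝ → ℝ} (hf : Integrable f μ) :
    Integrable (fun v : Fin n → ℝ => f (v i)) (Measure.pi fun _ : Fin n => μ) := by
  rcases n with _ | k
  · exact i.elim0
  · have mp := measurePreserving_piFinSuccAbove (fun _ : Fin (k+1) => μ) i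
    have emb := (MeasurableEquiv.piFinSuccAbove (fun _ : Fin (k+1) => ℝ) i).measurableEmbedding
    have h2 : Integrable
        ((fun z : ℝ × (Fin k → ℝ) => f z.1) ∘ (MeasurableEquiv.piFinSuccAbove (fun _ : Fin (k+1) => ℝ) i))
        (Measure.pi fun _ : Fin (k+1) => μ) := by
      refine (mp.integrable_comp_emb emb).2 ?_
      simpa using hf.mul_prod (integrable_const (1:ℝ))
    exact h2

lemma integral_eval_mul {k : ℕ} (i : Fin (k+1)) (f : ℝ → ℝ) (g : (Fin k → ℝ) → ℝ) :
    ∫ v, f (v i) * g (fun j => v (i.succAbove j)) ∂(Measure.pi fun _ : Fin (k+1) => μ)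
      = (∫ x, f x ∂μ) * ∫ y, g y ∂(Measure.pi fun _ : Fin k => μ) := by
  have mp := measurePreserving_piFinSuccAbove (fun _ : Fin (k+1) => μ) i
  have emb := (MeasurableEquiv.piFinSuccAbove (fun _ : Fin (k+1) => ℝ) i).measurableEmbedding
  calc ∫ v, f (v i) * g (fun j => v (i.succAbove j)) ∂(Measure.pi fun _ : Fin (k+1) => μ)
      = ∫ v, (fun z : ℝ × (Fin k → ℝ) => f z.1 * g z.2)
          ((MeasurableEquiv.piFinSuccAbove (fun _ : Fin (k+1) => ℝ) i) v)
          ∂(Measure.pi fun _ : Fin (k+1) => μ) := by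
        congr 1
    _ = ∫ z : ℝ × (Fin k → ℝ), f z.1 * g z.2 ∂(μ.prod (Measure.pi fun _ : Fin k => μ)) :=
        mp.integral_comp emb (fun z : ℝ × (Fin k → ℝ) => f z.1 * g z.2)
    _ = _ := integral_prod_mul f g

lemma integrable_sumAbs (n : ℕ) (hint : Integrable (id : ℝ → ℝ) μ) :
    Integrable (fun v : Fin n → ℝ => ∑ i, |v i|) (Measure.pi fun _ : Fin n => μ) := by
  refine integrable_finset_sum _ fun i _ => ?_
  exact integrable_eval i hint.abs

lemma integrable_wrI {q : ℝ} (hq : 0 < q) (n m : ℕ) (hint : Integrable (id : ℝ → ℝ) μ) :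
    Integrable (wrI n m q) (Measure.pi fun _ : Fin n => μ) := by
  refine Integrable.mono' (integrable_sumAbs n hint)
    (measurable_wrI n m q).aestronglyMeasurable ?_
  filter_upwards with v
  rw [Real.norm_eq_abs, abs_of_nonneg (wrI_nonneg hq n m v)]
  exact wrI_le_sumAbs hq n m v

lemma ktwI_nonneg {q δ : ℝ} (hq : 0 < q) (hδ : 0 < δ) (n m : ℕ) (v : Fin n → ℝ) :
    0 ≤ ktwI n m δ q v := by
  rw [ktwI]
  split
  · refine mul_nonneg (by positivity) (Finset.sum_nonneg fun i hi => ?_)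
    have hqi : q ≤ v i := (Finset.mem_filter.1 hi).2
    exact le_min (by linarith) (by positivity)
  · positivity

lemma ktwI_le {q δ : ℝ} (hq : 0 < q) (hδ : 0 < δ) (n m : ℕ) (hm : 1 ≤ m) (v : Fin n → ℝ) :
    ktwI n m δ q v ≤ (n + 1) * ((1 + δ) * q) := by
  have hc : (0:ℝ) < (1 + δ) * q := by positivity
  have hn0 : (0:ℝ) ≤ n := Nat.cast_nonneg n
  rw [ktwI]
  split
  · have hsum : ∑ i ∈ Finset.univ.filter (fun i => q ≤ v i), min (v i) ((1 + δ) * q)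
        ≤ (Finset.univ.filter (fun i : Fin n => q ≤ v i)).card • ((1 + δ) * q) :=
      Finset.sum_le_card_nsmul _ _ _ fun i _ => min_le_right _ _
    have hcard : ((Finset.univ.filter (fun i : Fin n => q ≤ v i)).card : ℝ) ≤ n := by
      have := Finset.card_filter_le (Finset.univ : Finset (Fin n)) (fun i => q ≤ v i)
      have h2 : (Finset.univ : Finset (Fin n)).card = n := Finset.card_univ.trans (Fintype.card_fin n)
      exact_mod_cast this.trans_eq h2
    have h0 : 0 ≤ ∑ i ∈ Finset.univ.filter (fun i : Fin n => q ≤ v i), min (v i) ((1 + δ) * q) :=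
      Finset.sum_nonneg fun i hi => le_min
        (by linarith [(Finset.mem_filter.1 hi).2]) hc.le
    have hm' : 1 / (m:ℝ) ≤ 1 := by
      rw [div_le_one (by exact_mod_cast Nat.pos_of_ne_zero (by omega))]
      exact_mod_cast hm
    calc (1 / (m : ℝ)) * ∑ i ∈ Finset.univ.filter (fun i => q ≤ v i), min (v i) ((1 + δ) * q)
        ≤ 1 * ∑ i ∈ Finset.univ.filter (fun i => q ≤ v i), min (v i) ((1 + δ) * q) :=
          mul_le_mul_of_nonneg_right hm' h0
      _ = ∑ i ∈ Finset.univ.filter (fun i => q ≤ v i), min (v i) ((1 + δ) * q) := one_mul _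
      _ ≤ (Finset.univ.filter (fun i : Fin n => q ≤ v i)).card • ((1 + δ) * q) := hsum
      _ = ((Finset.univ.filter (fun i : Fin n => q ≤ v i)).card : ℝ) * ((1 + δ) * q) :=
          nsmul_eq_mul _ _
      _ ≤ (n + 1) * ((1 + δ) * q) := by nlinarith
  · nlinarith

lemma integrable_ktwI {q δ : ℝ} (hq : 0 < q) (hδ : 0 < δ) (n m : ℕ) (hm : 1 ≤ m) :
    Integrable (ktwI n m δ q) (Measure.pi fun _ : Fin n => μ) := by
  refine Integrable.mono' (integrable_const ((n + 1) * ((1 + δ) * q)))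
    (measurable_ktwI n m δ q).aestronglyMeasurable ?_
  filter_upwards with v
  rw [Real.norm_eq_abs, abs_of_nonneg (ktwI_nonneg hq hδ n m v)]
  exact ktwI_le hq hδ n m hm v


lemma ktwI_le_wrI {q δ : ℝ} (hq : 0 < q) (hδ : 0 < δ) (n m : ℕ) (hm : 1 ≤ m)
    (v : Fin n → ℝ) :
    ktwI n m δ q v ≤ ((1 + δ) / m) * wrI n m q v := by
  have hm0 : (0:ℝ) < m := by exact_mod_cast hm
  have hSq : (demandCount n q v : ℝ) * q
      ≤ ∑ i ∈ Finset.univ.filter (fun i => q ≤ v i), v i := by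
    have h := Finset.card_nsmul_le_sum (Finset.univ.filter (fun i : Fin n => q ≤ v i))
      (fun i => v i) q (fun i hi => (Finset.mem_filter.1 hi).2)
    rw [nsmul_eq_mul] at h
    exact h
  have hS0 : 0 ≤ ∑ i ∈ Finset.univ.filter (fun i : Fin n => q ≤ v i), v i :=
    Finset.sum_nonneg fun i hi => le_trans hq.le (Finset.mem_filter.1 hi).2
  rw [ktwI, wrI]
  by_cases hlt : demandCount n q v < m
  · rw [if_pos hlt, if_pos hlt.le, one_mul]
    have h1 : ∑ i ∈ Finset.univ.filter (fun i : Fin n => q ≤ v i), min (v i) ((1 + δ) * q)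
        ≤ ∑ i ∈ Finset.univ.filter (fun i : Fin n => q ≤ v i), v i :=
      Finset.sum_le_sum fun i _ => min_le_left _ _
    calc (1 / (m : ℝ)) * ∑ i ∈ Finset.univ.filter (fun i : Fin n => q ≤ v i),
          min (v i) ((1 + δ) * q)
        ≤ (1 / (m : ℝ)) * ∑ i ∈ Finset.univ.filter (fun i : Fin n => q ≤ v i), v i :=
          mul_le_mul_of_nonneg_left h1 (by positivity)
      _ ≤ ((1 + δ) / m) * ∑ i ∈ Finset.univ.filter (fun i : Fin n => q ≤ v i), v i := by
          refine mul_le_mul_of_nonneg_right ?_ hS0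
          gcongr
          linarith
  · rw [if_neg hlt]
    push_neg at hlt
    have hmN : (m : ℝ) ≤ (demandCount n q v : ℝ) := by exact_mod_cast hlt
    have hfacS : (m:ℝ) * q ≤ (if demandCount n q v ≤ m then (1:ℝ)
        else (m : ℝ) / (demandCount n q v)) *
        ∑ i ∈ Finset.univ.filter (fun i : Fin n => q ≤ v i), v i := by
      by_cases hle : demandCount n q v ≤ m
      · rw [if_pos hle, one_mul]
        nlinarith
      · rw [if_neg hle]
        have hN0 : (0:ℝ) < (demandCount n q v : ℝ) := by linarith
        have hNne : (demandCount n q v : ℝ) ≠ 0 := ne_of_gt hN0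
        calc (m:ℝ) * q = (m:ℝ) / (demandCount n q v) * ((demandCount n q v : ℝ) * q) := by
              field_simp
          _ ≤ (m:ℝ) / (demandCount n q v) *
              ∑ i ∈ Finset.univ.filter (fun i : Fin n => q ≤ v i), v i :=
              mul_le_mul_of_nonneg_left hSq (by positivity)
    have hmne : (m:ℝ) ≠ 0 := ne_of_gt hm0
    calc (1 + δ) * q = ((1 + δ) / m) * ((m:ℝ) * q) := by
          field_simp
      _ ≤ ((1 + δ) / m) * ((if demandCount n q v ≤ m then (1:ℝ)
            else (m : ℝ) / (demandCount n q v)) *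
            ∑ i ∈ Finset.univ.filter (fun i : Fin n => q ≤ v i), v i) :=
          mul_le_mul_of_nonneg_left hfacS (by positivity)


lemma dc_succAbove {k : ℕ} (q : ℝ) (i : Fin (k+1)) (v : Fin (k+1) → ℝ) :
    demandCount (k+1) q v
      = (if q ≤ v i then 1 else 0) + demandCount k q (fun j => v (i.succAbove j)) := by
  rw [dc_eq, dc_eq]
  exact Fin.sum_univ_succAbove (fun j => if q ≤ v j then 1 else 0) i

lemma sum_term_le_wrI {q : ℝ} (hq : 0 < q) {k m : ℕ} (v : Fin (k+1) → ℝ) :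
    ∑ i : Fin (k+1), f0 q (v i) *
        (if demandCount k q (fun j => v (i.succAbove j)) < m then (1:ℝ) else 0)
      ≤ wrI (k+1) m q v := by
  rw [wrI, sum_filter_eq, Finset.mul_sum]
  refine Finset.sum_le_sum fun i _ => ?_
  by_cases hvi : q ≤ v i
  · by_cases hcnt : demandCount k q (fun j => v (i.succAbove j)) < m
    · rw [if_pos hcnt, mul_one]
      have hNle : demandCount (k+1) q v ≤ m := by
        rw [dc_succAbove q i v, if_pos hvi]
        omega
      rw [if_pos hNle, one_mul]
    · rw [if_neg hcnt, mul_zero]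
      exact mul_nonneg (factor_nonneg _ _ _ _) (f0_nonneg hq _)
  · have h0 : f0 q (v i) = 0 := if_neg hvi
    rw [h0, zero_mul, mul_zero]

lemma opt_nonneg (n m : ℕ) (v : Fin n → ℝ) :
    0 ≤ (((Finset.univ : Finset (Fin n)).powerset.filter fun S => S.card ≤ m).sup'
      ⟨∅, by simp⟩ fun S => ∑ i ∈ S, v i) := by
  have hmem : (∅ : Finset (Fin n))
      ∈ ((Finset.univ : Finset (Fin n)).powerset.filter fun S => S.card ≤ m) := by simp
  have h := Finset.le_sup' (f := fun S => ∑ i ∈ S, v i) hmem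
  simpa using h

lemma opt_le {q : ℝ} (hq : 0 < q) (n m : ℕ) (v : Fin n → ℝ) :
    (((Finset.univ : Finset (Fin n)).powerset.filter fun S => S.card ≤ m).sup'
      ⟨∅, by simp⟩ fun S => ∑ i ∈ S, v i) ≤ (m:ℝ) * q + ∑ i, f0 q (v i) := by
  refine Finset.sup'_le _ _ fun S hS => ?_
  have hcard : S.card ≤ m := (Finset.mem_filter.1 hS).2
  have h1 : ∑ i ∈ S, v i ≤ ∑ i ∈ S, (f0 q (v i) + q) := by
    refine Finset.sum_le_sum fun i _ => ?_
    unfold f0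
    split
    · linarith
    · rename_i h
      push_neg at h
      linarith
  rw [Finset.sum_add_distrib, Finset.sum_const, nsmul_eq_mul] at h1
  have h2 : ∑ i ∈ S, f0 q (v i) ≤ ∑ i, f0 q (v i) :=
    Finset.sum_le_sum_of_subset_of_nonneg (Finset.subset_univ S) fun i _ _ => f0_nonneg hq _
  have h3 : (S.card : ℝ) * q ≤ (m:ℝ) * q := by
    have hc : (S.card : ℝ) ≤ (m:ℝ) := by exact_mod_cast hcard
    nlinarith
  linarith

lemma ktwI_ge_ind {q δ : ℝ} (hq : 0 < q) (hδ : 0 < δ) (n m : ℕ) (v : Fin n → ℝ) :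
    (1 + δ) * q * (1 - (if demandCount n q v < m then (1:ℝ) else 0)) ≤ ktwI n m δ q v := by
  by_cases h : demandCount n q v < m
  · rw [if_pos h]
    simpa using ktwI_nonneg hq hδ n m v
  · rw [if_neg h, ktwI, if_neg h]
    simp

lemma measurable_indLt (n m : ℕ) (q : ℝ) :
    Measurable (fun v : Fin n → ℝ => if demandCount n q v < m then (1:ℝ) else 0) :=
  Measurable.ite (measSet_lt n q m) measurable_const measurable_const

lemma integrable_indLt (n m : ℕ) (q : ℝ) :
    Integrable (fun v : Fin n → ℝ => if demandCount n q v < m then (1:ℝ) else 0)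
      (Measure.pi fun _ : Fin n => μ) := by
  refine Integrable.mono' (integrable_const 1) (measurable_indLt n m q).aestronglyMeasurable ?_
  filter_upwards with v
  split <;> simp

lemma measurable_indLt' (k m : ℕ) (q : ℝ) (i : Fin (k+1)) :
    Measurable (fun v : Fin (k+1) → ℝ =>
      if demandCount k q (fun j => v (i.succAbove j)) < m then (1:ℝ) else 0) := by
  have hdc : Measurable (fun v : Fin (k+1) → ℝ => demandCount k q (fun j => v (i.succAbove j))) :=
    (measurable_dc k q).comp (measurable_pi_lambda _ fun j => measurable_pi_apply _)
  exact Measurable.ite (hdc (show MeasurableSet {c : ℕ | c < m} from trivial))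
    measurable_const measurable_const

lemma integrable_indLt' (k m : ℕ) (q : ℝ) (i : Fin (k+1)) :
    Integrable (fun v : Fin (k+1) → ℝ =>
      if demandCount k q (fun j => v (i.succAbove j)) < m then (1:ℝ) else 0)
      (Measure.pi fun _ : Fin (k+1) => μ) := by
  refine Integrable.mono' (integrable_const 1) (measurable_indLt' k m q i).aestronglyMeasurable ?_
  filter_upwards with v
  split <;> simp

lemma integrable_term (k m : ℕ) (q : ℝ) (i : Fin (k+1)) (hint : Integrable (id : ℝ → ℝ) μ) :
    Integrable (fun v : Fin (k+1) → ℝ => f0 q (v i) *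
        (if demandCount k q (fun j => v (i.succAbove j)) < m then (1:ℝ) else 0))
      (Measure.pi fun _ : Fin (k+1) => μ) := by
  have h1 : Integrable (fun v : Fin (k+1) → ℝ => f0 q (v i))
      (Measure.pi fun _ : Fin (k+1) => μ) := integrable_eval i (integrable_f0 hint q)
  have h := Integrable.bdd_mul h1 (measurable_indLt' k m q i).aestronglyMeasurable
    (c := 1) (ae_of_all _ fun v => by dsimp; split <;> simp)
  simpa [mul_comm] using h

end TWDPPaux

open TWDPPaux

/-- Theorem (TWDPP welfare at equilibrium): if `q > 0` is an equilibrium price of the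
TWDPP mechanism, i.e. `ktw_δ(q) = q`, then
`W_R(q) ≥ OPT · min(1, δ) / (2(1 + δ))`. -/
theorem twdpp_equilibrium_welfare
    (n m : ℕ) (hm : 1 ≤ m) (μ : Measure ℝ) [IsProbabilityMeasure μ]
    (hpos : ∀ᵐ x ∂μ, 0 ≤ x) (hint : Integrable (id : ℝ → ℝ) μ)
    (δ : ℝ) (hδ : 0 < δ)
    (q : ℝ) (hq : 0 < q) (heq : ktw n m δ μ q = q) :
    OPTwelfare n m μ * min 1 δ / (2 * (1 + δ)) ≤ WR n m μ q := by
  classical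
  have h1δ : (0:ℝ) < 1 + δ := by linarith
  have hmin0 : 0 ≤ min 1 δ := le_min (by norm_num) hδ.le
  have hmin1 : min 1 δ ≤ 1 := min_le_left _ _
  have hminδ : min 1 δ ≤ δ := min_le_right _ _
  rcases n with _ | k
  · -- n = 0 : both sides are 0
    have hzero : ∀ v : Fin 0 → ℝ,
        (((Finset.univ : Finset (Fin 0)).powerset.filter fun S => S.card ≤ m).sup'
          ⟨∅, by simp⟩ fun S => ∑ i ∈ S, v i) = 0 := by
      intro v
      refine le_antisymm (Finset.sup'_le _ _ fun S hS => ?_) (opt_nonneg 0 m v)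
      have hS0 : S = ∅ := Finset.eq_empty_of_isEmpty S
      simp [hS0]
    have hOPT : OPTwelfare 0 m μ = 0 := by
      have h : OPTwelfare 0 m μ
          = ∫ _v : Fin 0 → ℝ, (0:ℝ) ∂(Measure.pi fun _ : Fin 0 => μ) := by
        unfold OPTwelfare
        congr 1
      rw [h, integral_zero]
    have hWR : 0 ≤ WR 0 m μ q := by
      unfold WR
      exact integral_nonneg fun v => wrI_nonneg hq 0 m v
    rw [hOPT, zero_mul, zero_div]
    exact hWR
  · set P : Measure (Fin (k+1) → ℝ) := Measure.pi fun _ : Fin (k+1) => μ with hP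
    set P' : Measure (Fin k → ℝ) := Measure.pi fun _ : Fin k => μ with hP'
    have WR_eq : WR (k+1) m μ q = ∫ v, wrI (k+1) m q v ∂P := rfl
    have ktw_eq : ktw (k+1) m δ μ q = ∫ v, ktwI (k+1) m δ q v ∂P := rfl
    have hIwr : Integrable (wrI (k+1) m q) P := integrable_wrI hq _ _ hint
    have hIktw : Integrable (ktwI (k+1) m δ q) P := integrable_ktwI hq hδ _ _ hm
    have hW0 : 0 ≤ WR (k+1) m μ q := by
      rw [WR_eq]; exact integral_nonneg fun v => wrI_nonneg hq _ _ v
    have hm0 : (0:ℝ) < m := by exact_mod_cast hm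
    -- Step A : m q ≤ (1+δ) W
    have hstepA : (m:ℝ) * q ≤ (1 + δ) * WR (k+1) m μ q := by
      have h1 : ∫ v, ktwI (k+1) m δ q v ∂P ≤ ∫ v, ((1 + δ) / m) * wrI (k+1) m q v ∂P :=
        integral_mono hIktw (hIwr.const_mul _) fun v => ktwI_le_wrI hq hδ _ _ hm v
      rw [integral_const_mul, ← ktw_eq, heq, ← WR_eq] at h1
      rw [div_mul_eq_mul_div, le_div_iff₀ hm0] at h1
      linarith
    -- equilibrium probability bound
    have hpLow : δ / (1 + δ) ≤ ∫ v, (if demandCount (k+1) q v < m then (1:ℝ) else 0) ∂P := by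
      have h1 : ∫ v, (1 + δ) * q * (1 - (if demandCount (k+1) q v < m then (1:ℝ) else 0)) ∂P
          ≤ ∫ v, ktwI (k+1) m δ q v ∂P :=
        integral_mono (((integrable_const 1).sub (integrable_indLt (k+1) m q)).const_mul _)
          hIktw fun v => ktwI_ge_ind hq hδ _ _ v
      rw [← ktw_eq, heq, integral_const_mul,
        integral_sub (integrable_const 1) (integrable_indLt (k+1) m q), integral_const] at h1
      simp only [probReal_univ, measure_univ, ENNReal.toReal_one, smul_eq_mul, mul_one, one_smul] at h1
      rw [div_le_iff₀ h1δ]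
      nlinarith [h1, hq]
    -- pass to n-1 bidders
    have hgLbound : δ / (1 + δ) ≤ ∫ y, (if demandCount k q y < m then (1:ℝ) else 0) ∂P' := by
      have hmono : ∫ v, (if demandCount (k+1) q v < m then (1:ℝ) else 0) ∂P
          ≤ ∫ v, (if demandCount k q (fun j => v ((0 : Fin (k+1)).succAbove j)) < m
              then (1:ℝ) else 0) ∂P := by
        refine integral_mono (integrable_indLt (k+1) m q) (integrable_indLt' k m q 0) fun v => ?_
        by_cases h : demandCount (k+1) q v < m
        · have h2 : demandCount k q (fun j => v ((0 : Fin (k+1)).succAbove j)) < m := by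
            have h3 := dc_succAbove q (0 : Fin (k+1)) v
            split at h3 <;> omega
          rw [if_pos h, if_pos h2]
        · rw [if_neg h]
          split <;> norm_num
      have hfact : ∫ v, (if demandCount k q (fun j => v ((0 : Fin (k+1)).succAbove j)) < m
              then (1:ℝ) else 0) ∂P
          = ∫ y, (if demandCount k q y < m then (1:ℝ) else 0) ∂P' := by
        have h := integral_eval_mul (μ := μ) (0 : Fin (k+1)) (fun _ => (1:ℝ))
          (fun y => if demandCount k q y < m then (1:ℝ) else 0)
        simpa using h
      linarith
    -- the expected above-price value
    have hIf0 : Integrable (f0 q) μ := integrable_f0 hint q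
    have hI0 : 0 ≤ ∫ x, f0 q x ∂μ := integral_nonneg fun x => f0_nonneg hq x
    have hterm : ∀ i : Fin (k+1), (∫ x, f0 q x ∂μ) * (δ / (1 + δ))
        ≤ ∫ v, f0 q (v i) *
            (if demandCount k q (fun j => v (i.succAbove j)) < m then (1:ℝ) else 0) ∂P := by
      intro i
      rw [integral_eval_mul i (f0 q) (fun y => if demandCount k q y < m then (1:ℝ) else 0)]
      exact mul_le_mul_of_nonneg_left hgLbound hI0
    have hsumW : ∑ i : Fin (k+1), ∫ v, f0 q (v i) *
          (if demandCount k q (fun j => v (i.succAbove j)) < m then (1:ℝ) else 0) ∂P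
        ≤ WR (k+1) m μ q := by
      rw [WR_eq, ← integral_finset_sum _ (fun i _ => integrable_term k m q i hint)]
      exact integral_mono (integrable_finset_sum _ fun i _ => integrable_term k m q i hint)
        hIwr fun v => sum_term_le_wrI hq v
    have hDW : ((k+1 : ℕ):ℝ) * (∫ x, f0 q x ∂μ) * (δ / (1 + δ)) ≤ WR (k+1) m μ q := by
      have hsum : ∑ _i : Fin (k+1), (∫ x, f0 q x ∂μ) * (δ / (1 + δ))
          ≤ ∑ i : Fin (k+1), ∫ v, f0 q (v i) *
              (if demandCount k q (fun j => v (i.succAbove j)) < m then (1:ℝ) else 0) ∂P :=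
        Finset.sum_le_sum fun i _ => hterm i
      rw [Finset.sum_const, Finset.card_univ, Fintype.card_fin, nsmul_eq_mul] at hsum
      calc ((k+1 : ℕ):ℝ) * (∫ x, f0 q x ∂μ) * (δ / (1 + δ))
          = ((k+1 : ℕ):ℝ) * ((∫ x, f0 q x ∂μ) * (δ / (1 + δ))) := by ring
        _ ≤ _ := hsum.trans hsumW
    -- OPT bound
    have hDi : ∀ i : Fin (k+1), ∫ v, f0 q (v i) ∂P = ∫ x, f0 q x ∂μ := by
      intro i
      have h := integral_eval_mul (μ := μ) i (f0 q) (fun _ => (1:ℝ))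
      simpa using h
    have hOPT : OPTwelfare (k+1) m μ ≤ (m:ℝ) * q + ((k+1 : ℕ):ℝ) * (∫ x, f0 q x ∂μ) := by
      have hgint : Integrable (fun v : Fin (k+1) → ℝ => (m:ℝ) * q + ∑ i, f0 q (v i)) P :=
        (integrable_const _).add (integrable_finset_sum _ fun i _ => integrable_eval i hIf0)
      have h := integral_mono_of_nonneg
        (f := fun v : Fin (k+1) → ℝ =>
          (((Finset.univ : Finset (Fin (k+1))).powerset.filter fun S => S.card ≤ m).sup'
            ⟨∅, by simp⟩ fun S => ∑ i ∈ S, v i))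
        (g := fun v : Fin (k+1) → ℝ => (m:ℝ) * q + ∑ i, f0 q (v i))
        (μ := P)
        (ae_of_all _ fun v => opt_nonneg _ _ v) hgint (ae_of_all _ fun v => opt_le hq _ _ v)
      have heval : ∫ v, ((m:ℝ) * q + ∑ i, f0 q (v i)) ∂P
          = (m:ℝ) * q + ((k+1 : ℕ):ℝ) * (∫ x, f0 q x ∂μ) := by
        rw [integral_add (integrable_const _)
            (integrable_finset_sum _ fun i _ => integrable_eval i hIf0),
          integral_const, integral_finset_sum _ (fun i _ => integrable_eval i hIf0)]
        simp only [probReal_univ, measure_univ, ENNReal.toReal_one, one_smul]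
        congr 1
        rw [Finset.sum_congr rfl (fun i _ => hDi i), Finset.sum_const, Finset.card_univ,
          Fintype.card_fin, nsmul_eq_mul]
      exact le_of_le_of_eq h heval
    -- final arithmetic
    have hD0 : 0 ≤ ((k+1 : ℕ):ℝ) * (∫ x, f0 q x ∂μ) :=
      mul_nonneg (Nat.cast_nonneg _) hI0
    have hDδ : (((k+1 : ℕ):ℝ) * (∫ x, f0 q x ∂μ)) * δ ≤ (1 + δ) * WR (k+1) m μ q := by
      have h := hDW
      rw [← mul_div_assoc, div_le_iff₀ h1δ] at h
      linarith
    rw [div_le_iff₀ (by positivity : (0:ℝ) < 2 * (1 + δ))]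
    nlinarith [mul_le_mul_of_nonneg_right hOPT hmin0,
      mul_le_mul_of_nonneg_left hmin1 (show (0:ℝ) ≤ (m:ℝ) * q by positivity),
      mul_le_mul_of_nonneg_left hminδ hD0, hstepA, hDδ, hW0]
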